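/- Let F be an algebraically closed field whose characteristic is neither 2 nor 5. Then there exists a ∈ F with 2a² - 2a + 1 = 0 and (3a - 1)(a + 1) ≠ 0. (Consequently, the divisionally free but not inductively free rank-3 matroid with 14 atoms is representable in every characteristic distinct from 2 and 5.) -/

import Mathlib

/-- Over any algebraically closed field of characteristic neither
2 nor 5 there exists `a` with `2a² - 2a + 1 = 0` and `(3a - 1)(a + 1) ≠ 0`. -/
theorem exists_root_with_nonvanishing {F : Type*} [Field F] [IsAlgClosed F]
    (h2 : ringChar F ≠ 2) (h5 : ringChar F ≠ 5) :
    ∃ a : F, 2 * a ^ 2 - 2 * a + 1 = 0 ∧ (3 * a - 1) * (a + 1) ≠ 0 := by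
  have htwo : (2 : F) ≠ 0 := Ring.two_ne_zero h2
  have hten : (10 : F) ≠ 0 := by
    intro h
    have hdvd : ringChar F ∣ 10 :=
      (CharP.cast_eq_zero_iff F (ringChar F) 10).mp (by exact_mod_cast h)
    rcases CharP.char_is_prime_or_zero F (ringChar F) with hp | hp
    · have hle : ringChar F ≤ 10 := Nat.le_of_dvd (by norm_num) hdvd
      have h2' := hp.two_le
      interval_cases hh : (ringChar F) <;> first | omega | norm_num at hp
    · rw [hp] at hdvd; simp at hdvd
  obtain ⟨i, hi⟩ := IsAlgClosed.exists_pow_nat_eq (-1 : F) (n := 2) (by norm_num)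
  refine ⟨(1 + i) / 2, ?_, ?_⟩
  · field_simp
    linear_combination hi
  · intro h
    rcases mul_eq_zero.mp h with h | h
    · field_simp at h
      exact hten (by linear_combination (1 - 3 * i) * h + 9 * hi)
    · field_simp at h
      exact hten (by linear_combination (3 - i) * h + hi)
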